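/- For every u ∈ U: Q^qnl(u) ≥ A_F ‖Du‖²_{ℓ²ε}. -/

import Mathlib

open Finset

noncomputable section

/-- `u` is `2N`-periodic. -/
def IsPer (N : ℤ) (u : ℤ → ℝ) : Prop := ∀ ℓ : ℤ, u (ℓ + 2*N) = u ℓ

/-- `u` belongs to the displacement space `U`: `2N`-periodic with zero mean. -/
def InU (N : ℤ) (u : ℤ → ℝ) : Prop :=
  IsPer N u ∧ ∑ ℓ ∈ Finset.Icc (-N+1) N, u ℓ = 0

/-- the scaled reference atomic spacing `ε = 1/N`. -/
def eps (N : ℤ) : ℝ := 1 / (N : ℝ)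

/-- discrete derivative `(Dv)_ℓ = (v_ℓ - v_{ℓ-1})/ε`. -/
def Dd (N : ℤ) (v : ℤ → ℝ) : ℤ → ℝ := fun ℓ => (v ℓ - v (ℓ-1)) / eps N

/-- squared `ℓ²ε` norm: `ε Σ_{ℓ=-N+1}^{N} v_ℓ²`. -/
def nrm2 (N : ℤ) (v : ℤ → ℝ) : ℝ := eps N * ∑ ℓ ∈ Finset.Icc (-N+1) N, (v ℓ)^2

/-- `Ã_F = φ''_F + 4φ''_{2F}`. -/
def Atil (pF p2F : ℝ) : ℝ := pF + 4*p2F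

/-- `Â_F = 4G''_F(ρ'_F+2ρ'_{2F})² + 2G'_F(ρ''_F+4ρ''_{2F})`. -/
def Ahat (rF r2F rrF rr2F g1 g2 : ℝ) : ℝ := 4*g2*(rF + 2*r2F)^2 + 2*g1*(rrF + 4*rr2F)

/-- `A_F = Â_F + Ã_F`. -/
def AFc (pF p2F rF r2F rrF rr2F g1 g2 : ℝ) : ℝ := Ahat rF r2F rrF rr2F g1 g2 + Atil pF p2F

/-- `B_F`. -/
def BFc (p2F rF r2F rr2F g1 g2 : ℝ) : ℝ :=
  -(p2F + g2*(rF^2 + 20*r2F^2 + 12*rF*r2F) + 2*g1*rr2F)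

/-- `C_F`. -/
def CFc (rF r2F g2 : ℝ) : ℝ := g2*(8*r2F^2 + 2*rF*r2F)

/-- `D_F`. -/
def DFc (r2F g2 : ℝ) : ℝ := -(g2*r2F^2)

/-- `λ_F(s) = A_F + B_F s + C_F s² + D_F s³`. -/
def lamF (pF p2F rF r2F rrF rr2F g1 g2 s : ℝ) : ℝ :=
  AFc pF p2F rF r2F rrF rr2F g1 g2 + BFc p2F rF r2F rr2F g1 g2 * s
    + CFc rF r2F g2 * s^2 + DFc r2F g2 * s^3

/-- per-atom atomistic contribution `q^a_ℓ(u)`. -/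
def qaAtom (N : ℤ) (pF p2F rF r2F rrF rr2F g1 g2 : ℝ) (u : ℤ → ℝ) (ℓ : ℤ) : ℝ :=
  g2 * (rF * (Dd N u ℓ + Dd N u (ℓ+1))
      + r2F * (Dd N u (ℓ-1) + Dd N u ℓ + Dd N u (ℓ+1) + Dd N u (ℓ+2)))^2
   + g1 * (rrF * (Dd N u ℓ)^2 + rr2F * (Dd N u ℓ + Dd N u (ℓ-1))^2
         + rrF * (Dd N u (ℓ+1))^2 + rr2F * (Dd N u (ℓ+1) + Dd N u (ℓ+2))^2)
   + (1/2) * (pF * ((Dd N u ℓ)^2 + (Dd N u (ℓ+1))^2)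
         + p2F * ((Dd N u ℓ + Dd N u (ℓ-1))^2 + (Dd N u (ℓ+1) + Dd N u (ℓ+2))^2))

/-- interfacial contribution `q^i` with index triple `(a,b,c)`. -/
def qiAtom (N : ℤ) (pF p2F rF r2F rrF rr2F g1 g2 : ℝ) (u : ℤ → ℝ) (a b c : ℤ) : ℝ :=
  2*g2*(rF * Dd N u b + r2F*(Dd N u b + Dd N u a))^2
  + g1*(rrF*(Dd N u b)^2 + rr2F*(Dd N u b + Dd N u a)^2)
  + (2*g2*(rF + 2*r2F)^2 + g1*(rrF + 4*rr2F))*(Dd N u c)^2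
  + (1/2)*(pF*((Dd N u b)^2 + (Dd N u c)^2) + p2F*((Dd N u b + Dd N u a)^2 + 4*(Dd N u c)^2))

/-- continuum contribution `q^c_ℓ(u) = (A_F/2)((u'_ℓ)² + (u'_{ℓ+1})²)`. -/
def qcAtom (N : ℤ) (pF p2F rF r2F rrF rr2F g1 g2 : ℝ) (u : ℤ → ℝ) (ℓ : ℤ) : ℝ :=
  (AFc pF p2F rF r2F rrF rr2F g1 g2 / 2) * ((Dd N u ℓ)^2 + (Dd N u (ℓ+1))^2)

/-- the QNL second-variation quadratic form `Q^qnl`. -/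
def Qqnl (N K : ℤ) (pF p2F rF r2F rrF rr2F g1 g2 : ℝ) (u : ℤ → ℝ) : ℝ :=
  eps N * ((∑ ℓ ∈ Finset.Icc (-K) K, qaAtom N pF p2F rF r2F rrF rr2F g1 g2 u ℓ)
    + qiAtom N pF p2F rF r2F rrF rr2F g1 g2 u K (K+1) (K+2)
    + qiAtom N pF p2F rF r2F rrF rr2F g1 g2 u (K+1) (K+2) (K+3)
    + qiAtom N pF p2F rF r2F rrF rr2F g1 g2 u (-K+1) (-K) (-K-1)
    + qiAtom N pF p2F rF r2F rrF rr2F g1 g2 u (-K) (-K-1) (-K-2)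
    + ∑ ℓ ∈ (Finset.Icc (-N+1) (-K-3) ∪ Finset.Icc (K+3) N),
        qcAtom N pF p2F rF r2F rrF rr2F g1 g2 u ℓ)


/-- telescoping potential used in the per-atom estimates. -/
def Tqnl (p2F rF r2F rr2F g1 g2 x y z : ℝ) : ℝ :=
  (p2F + 2*g1*rr2F)*(z^2 - x^2)
  + g2*((8*r2F^2 + 5*rF*r2F + rF^2/2)*(z^2 - x^2) + (8*r2F^2 + 6*rF*r2F + rF^2)*(x*y - y*z))

lemma Tqnl_antisym (p2F rF r2F rr2F g1 g2 x y z : ℝ) :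
    Tqnl p2F rF r2F rr2F g1 g2 z y x = -Tqnl p2F rF r2F rr2F g1 g2 x y z := by
  unfold Tqnl; ring

/-- polynomial form of `qaAtom`. -/
def qaP (pF p2F rF r2F rrF rr2F g1 g2 a b c d : ℝ) : ℝ :=
  g2 * (rF * (b + c) + r2F * (a + b + c + d))^2
   + g1 * (rrF * b^2 + rr2F * (b + a)^2 + rrF * c^2 + rr2F * (c + d)^2)
   + (1/2) * (pF * (b^2 + c^2) + p2F * ((b + a)^2 + (c + d)^2))

/-- polynomial form of `qiAtom`. -/
def qiP (pF p2F rF r2F rrF rr2F g1 g2 a b c : ℝ) : ℝ :=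
  2*g2*(rF * b + r2F*(b + a))^2
  + g1*(rrF*b^2 + rr2F*(b + a)^2)
  + (2*g2*(rF + 2*r2F)^2 + g1*(rrF + 4*rr2F))*c^2
  + (1/2)*(pF*(b^2 + c^2) + p2F*((b + a)^2 + 4*c^2))

lemma key_atom (pF p2F rF r2F rrF rr2F g1 g2 : ℝ)
    (hH1c : rF ≤ 0) (hH1d : r2F ≤ 0) (hH1g : 0 ≤ g2)
    (hH2 : 0 ≤ BFc p2F rF r2F rr2F g1 g2) (a b c d : ℝ) :
    AFc pF p2F rF r2F rrF rr2F g1 g2 / 2 * (b^2 + c^2)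
      + (Tqnl p2F rF r2F rr2F g1 g2 b c d - Tqnl p2F rF r2F rr2F g1 g2 a b c)
    ≤ qaP pF p2F rF r2F rrF rr2F g1 g2 a b c d := by
  have h1 : 0 ≤ BFc p2F rF r2F rr2F g1 g2 / 2 * ((b-a)^2 + (d-c)^2) := by
    apply mul_nonneg (by linarith) (by positivity)
  have h2 : 0 ≤ g2 * (r2F * (2*r2F + rF)) * ((c - 2*b + a)^2 + (d - 2*c + b)^2) := by
    have hr : 0 ≤ r2F * (2*r2F + rF) := by nlinarith
    apply mul_nonneg (mul_nonneg hH1g hr) (by positivity)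
  have h3 : 0 ≤ g2 * (r2F * ((c - 2*b + a) + (d - 2*c + b)))^2 := by positivity
  have hid : qaP pF p2F rF r2F rrF rr2F g1 g2 a b c d
      - (AFc pF p2F rF r2F rrF rr2F g1 g2 / 2 * (b^2 + c^2)
        + (Tqnl p2F rF r2F rr2F g1 g2 b c d - Tqnl p2F rF r2F rr2F g1 g2 a b c))
      = BFc p2F rF r2F rr2F g1 g2 / 2 * ((b-a)^2 + (d-c)^2)
        + g2 * (r2F * (2*r2F + rF)) * ((c - 2*b + a)^2 + (d - 2*c + b)^2)
        + g2 * (r2F * ((c - 2*b + a) + (d - 2*c + b)))^2 := by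
    unfold qaP AFc Ahat Atil BFc Tqnl; ring
  linarith

lemma key_intf (pF p2F rF r2F rrF rr2F g1 g2 : ℝ)
    (hH1c : rF ≤ 0) (hH1d : r2F ≤ 0) (hH1g : 0 ≤ g2)
    (hH2 : 0 ≤ BFc p2F rF r2F rr2F g1 g2) (a b c d : ℝ) :
    AFc pF p2F rF r2F rrF rr2F g1 g2 / 2 * (b^2 + 2*c^2 + d^2)
    ≤ qiP pF p2F rF r2F rrF rr2F g1 g2 a b c
      + qiP pF p2F rF r2F rrF rr2F g1 g2 b c d
      + Tqnl p2F rF r2F rr2F g1 g2 a b c := by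
  have h1 : 0 ≤ BFc p2F rF r2F rr2F g1 g2 / 2 * ((b-a)^2 + (c-b)^2) := by
    apply mul_nonneg (by linarith) (by positivity)
  have hr : 0 ≤ rF * r2F := by nlinarith
  have h2 : 0 ≤ g2 * (r2F^2*(4*(a-b)^2 + 12*(c-b)^2) + (rF*r2F)*((a-b)^2 + 7*(c-b)^2)
      + rF^2*(c-b)^2) := by
    apply mul_nonneg hH1g
    have : 0 ≤ (rF*r2F)*((a-b)^2 + 7*(c-b)^2) := by apply mul_nonneg hr (by positivity)
    nlinarith [sq_nonneg (a-b), sq_nonneg (c-b), sq_nonneg r2F, sq_nonneg rF,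
      mul_nonneg (sq_nonneg r2F) (sq_nonneg (a-b)), mul_nonneg (sq_nonneg r2F) (sq_nonneg (c-b)),
      mul_nonneg (sq_nonneg rF) (sq_nonneg (c-b))]
  have hid : qiP pF p2F rF r2F rrF rr2F g1 g2 a b c
      + qiP pF p2F rF r2F rrF rr2F g1 g2 b c d
      + Tqnl p2F rF r2F rr2F g1 g2 a b c
      - AFc pF p2F rF r2F rrF rr2F g1 g2 / 2 * (b^2 + 2*c^2 + d^2)
      = BFc p2F rF r2F rr2F g1 g2 / 2 * ((b-a)^2 + (c-b)^2)
        + g2 * (r2F^2*(4*(a-b)^2 + 12*(c-b)^2) + (rF*r2F)*((a-b)^2 + 7*(c-b)^2)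
          + rF^2*(c-b)^2) := by
    unfold qiP AFc Ahat Atil BFc Tqnl; ring
  linarith

lemma sum_Icc_bot' (f : ℤ → ℝ) {a b : ℤ} (a' : ℤ) (h : a ≤ b) (h' : a' = a + 1) :
    ∑ ℓ ∈ Finset.Icc a b, f ℓ = f a + ∑ ℓ ∈ Finset.Icc a' b, f ℓ := by
  subst h'
  have he : Finset.Icc a b = insert a (Finset.Icc (a+1) b) := by
    ext x; simp only [Finset.mem_Icc, Finset.mem_insert]; omega
  rw [he, Finset.sum_insert (by simp only [Finset.mem_Icc]; omega)]

lemma sum_Icc_top' (f : ℤ → ℝ) {a b : ℤ} (b' : ℤ) (h : a ≤ b) (h' : b' = b - 1) :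
    ∑ ℓ ∈ Finset.Icc a b, f ℓ = (∑ ℓ ∈ Finset.Icc a b', f ℓ) + f b := by
  subst h'
  have he : Finset.Icc a b = insert b (Finset.Icc a (b-1)) := by
    ext x; simp only [Finset.mem_Icc, Finset.mem_insert]; omega
  rw [he, Finset.sum_insert (by simp only [Finset.mem_Icc]; omega), add_comm]

lemma sum_Icc_shift (f : ℤ → ℝ) (a b : ℤ) :
    ∑ ℓ ∈ Finset.Icc a b, f (ℓ + 1) = ∑ ℓ ∈ Finset.Icc (a+1) (b+1), f ℓ := by
  rw [← Finset.map_add_right_Icc a b 1, Finset.sum_map]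
  rfl

lemma main_est (N K : ℤ) (hK0 : 0 ≤ K) (hKN : K + 3 ≤ N)
    (pF p2F rF r2F rrF rr2F g1 g2 : ℝ)
    (hH1c : rF ≤ 0) (hH1d : r2F ≤ 0) (hH1g : 0 ≤ g2)
    (hH2 : 0 ≤ BFc p2F rF r2F rr2F g1 g2)
    (v : ℤ → ℝ) (hvper : ∀ ℓ, v (ℓ + 2*N) = v ℓ) :
    AFc pF p2F rF r2F rrF rr2F g1 g2 * ∑ ℓ ∈ Finset.Icc (-N+1) N, (v ℓ)^2
    ≤ (∑ ℓ ∈ Finset.Icc (-K) K,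
          qaP pF p2F rF r2F rrF rr2F g1 g2 (v (ℓ-1)) (v ℓ) (v (ℓ+1)) (v (ℓ+2)))
      + qiP pF p2F rF r2F rrF rr2F g1 g2 (v K) (v (K+1)) (v (K+2))
      + qiP pF p2F rF r2F rrF rr2F g1 g2 (v (K+1)) (v (K+2)) (v (K+3))
      + qiP pF p2F rF r2F rrF rr2F g1 g2 (v (-K+1)) (v (-K)) (v (-K-1))
      + qiP pF p2F rF r2F rrF rr2F g1 g2 (v (-K)) (v (-K-1)) (v (-K-2))
      + ∑ ℓ ∈ (Finset.Icc (-N+1) (-K-3) ∪ Finset.Icc (K+3) N),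
          AFc pF p2F rF r2F rrF rr2F g1 g2 / 2 * ((v ℓ)^2 + (v (ℓ+1))^2) := by
  set AF := AFc pF p2F rF r2F rrF rr2F g1 g2 with hAFdef
  set t : ℤ → ℝ := fun ℓ => Tqnl p2F rF r2F rr2F g1 g2 (v (ℓ-1)) (v ℓ) (v (ℓ+1)) with htdef
  set C : Finset ℤ := Finset.Icc (-N+1) (-K-3) ∪ Finset.Icc (K+3) N with hCdef
  -- set decomposition
  have hdisj : Disjoint C (Finset.Icc (-K-2) (K+2)) := by
    rw [Finset.disjoint_left]
    intro x hx hx'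
    simp only [hCdef, Finset.mem_union, Finset.mem_Icc] at hx hx'
    omega
  have hun : C ∪ Finset.Icc (-K-2) (K+2) = Finset.Icc (-N+1) N := by
    ext x
    simp only [hCdef, Finset.mem_union, Finset.mem_Icc]
    omega
  have hsplit : ∀ f : ℤ → ℝ, ∑ ℓ ∈ Finset.Icc (-N+1) N, f ℓ
      = (∑ ℓ ∈ C, f ℓ) + ∑ ℓ ∈ Finset.Icc (-K-2) (K+2), f ℓ := by
    intro f
    rw [← hun, Finset.sum_union hdisj]
  -- periodic shift of the full-period sum
  have hperiod : ∑ ℓ ∈ Finset.Icc (-N+1) N, (v (ℓ+1))^2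
      = ∑ ℓ ∈ Finset.Icc (-N+1) N, (v ℓ)^2 := by
    rw [sum_Icc_shift (fun ℓ => (v ℓ)^2) (-N+1) N]
    have h1 : ∑ ℓ ∈ Finset.Icc (-N+1+1) (N+1), (v ℓ)^2
        = (∑ ℓ ∈ Finset.Icc (-N+1+1) N, (v ℓ)^2) + (v (N+1))^2 :=
      sum_Icc_top' (fun ℓ => (v ℓ)^2) N (by omega) (by ring)
    have h2 : ∑ ℓ ∈ Finset.Icc (-N+1) N, (v ℓ)^2
        = (v (-N+1))^2 + ∑ ℓ ∈ Finset.Icc (-N+1+1) N, (v ℓ)^2 :=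
      sum_Icc_bot' (fun ℓ => (v ℓ)^2) (-N+1+1) (by omega) (by ring)
    have h3 : (v (N+1))^2 = (v (-N+1))^2 := by
      rw [show (N+1 : ℤ) = -N+1 + 2*N by ring, hvper]
    linarith
  -- shift of the middle-region sum
  have hM : ∑ ℓ ∈ Finset.Icc (-K-2) (K+2), (v (ℓ+1))^2
      = ∑ ℓ ∈ Finset.Icc (-K-2) (K+2), (v ℓ)^2 - (v (-K-2))^2 + (v (K+3))^2 := by
    rw [sum_Icc_shift (fun ℓ => (v ℓ)^2) (-K-2) (K+2)]
    have h1 : ∑ ℓ ∈ Finset.Icc (-K-2) (K+3), (v ℓ)^2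
        = (∑ ℓ ∈ Finset.Icc (-K-2) (K+2), (v ℓ)^2) + (v (K+3))^2 :=
      sum_Icc_top' (fun ℓ => (v ℓ)^2) (K+2) (by omega) (by ring)
    have h2 : ∑ ℓ ∈ Finset.Icc (-K-2) (K+3), (v ℓ)^2
        = (v (-K-2))^2 + ∑ ℓ ∈ Finset.Icc (-K-1) (K+3), (v ℓ)^2 :=
      sum_Icc_bot' (fun ℓ => (v ℓ)^2) (-K-1) (by omega) (by ring)
    rw [show (-K-2+1 : ℤ) = -K-1 by ring, show (K+2+1 : ℤ) = K+3 by ring]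
    linarith
  -- shifted sum over the continuum region
  have hCshift : ∑ ℓ ∈ C, (v (ℓ+1))^2
      = (∑ ℓ ∈ C, (v ℓ)^2) + (v (-K-2))^2 - (v (K+3))^2 := by
    have e1 := hsplit (fun ℓ => (v (ℓ+1))^2)
    have e2 := hsplit (fun ℓ => (v ℓ)^2)
    linarith
  -- continuum part
  have hqc : ∑ ℓ ∈ C, AF / 2 * ((v ℓ)^2 + (v (ℓ+1))^2)
      = AF * (∑ ℓ ∈ C, (v ℓ)^2) + AF/2 * (v (-K-2))^2 - AF/2 * (v (K+3))^2 := by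
    rw [← Finset.mul_sum, Finset.sum_add_distrib, hCshift]
    ring
  -- middle region decomposition
  have hMdec : ∑ ℓ ∈ Finset.Icc (-K-2) (K+2), (v ℓ)^2
      = (v (-K-2))^2 + (v (-K-1))^2 + (∑ ℓ ∈ Finset.Icc (-K) K, (v ℓ)^2)
        + (v (K+1))^2 + (v (K+2))^2 := by
    have h1 : ∑ ℓ ∈ Finset.Icc (-K-2) (K+2), (v ℓ)^2
        = (v (-K-2))^2 + ∑ ℓ ∈ Finset.Icc (-K-1) (K+2), (v ℓ)^2 :=
      sum_Icc_bot' (fun ℓ => (v ℓ)^2) (-K-1) (by omega) (by ring)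
    have h2 : ∑ ℓ ∈ Finset.Icc (-K-1) (K+2), (v ℓ)^2
        = (v (-K-1))^2 + ∑ ℓ ∈ Finset.Icc (-K) (K+2), (v ℓ)^2 :=
      sum_Icc_bot' (fun ℓ => (v ℓ)^2) (-K) (by omega) (by ring)
    have h3 : ∑ ℓ ∈ Finset.Icc (-K) (K+2), (v ℓ)^2
        = (∑ ℓ ∈ Finset.Icc (-K) (K+1), (v ℓ)^2) + (v (K+2))^2 :=
      sum_Icc_top' (fun ℓ => (v ℓ)^2) (K+1) (by omega) (by ring)
    have h4 : ∑ ℓ ∈ Finset.Icc (-K) (K+1), (v ℓ)^2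
        = (∑ ℓ ∈ Finset.Icc (-K) K, (v ℓ)^2) + (v (K+1))^2 :=
      sum_Icc_top' (fun ℓ => (v ℓ)^2) K (by omega) (by ring)
    linarith
  -- atomistic region: shifted sums
  have hshiftF : ∑ ℓ ∈ Finset.Icc (-K) K, (v (ℓ+1))^2
      = (∑ ℓ ∈ Finset.Icc (-K) K, (v ℓ)^2) - (v (-K))^2 + (v (K+1))^2 := by
    rw [sum_Icc_shift (fun ℓ => (v ℓ)^2) (-K) K]
    have h1 : ∑ ℓ ∈ Finset.Icc (-K) (K+1), (v ℓ)^2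
        = (∑ ℓ ∈ Finset.Icc (-K) K, (v ℓ)^2) + (v (K+1))^2 :=
      sum_Icc_top' (fun ℓ => (v ℓ)^2) K (by omega) (by ring)
    have h2 : ∑ ℓ ∈ Finset.Icc (-K) (K+1), (v ℓ)^2
        = (v (-K))^2 + ∑ ℓ ∈ Finset.Icc (-K+1) (K+1), (v ℓ)^2 :=
      sum_Icc_bot' (fun ℓ => (v ℓ)^2) (-K+1) (by omega) (by ring)
    linarith
  have hshiftT : ∑ ℓ ∈ Finset.Icc (-K) K, t (ℓ+1)
      = (∑ ℓ ∈ Finset.Icc (-K) K, t ℓ) - t (-K) + t (K+1) := by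
    rw [sum_Icc_shift t (-K) K]
    have h1 : ∑ ℓ ∈ Finset.Icc (-K) (K+1), t ℓ
        = (∑ ℓ ∈ Finset.Icc (-K) K, t ℓ) + t (K+1) :=
      sum_Icc_top' t K (by omega) (by ring)
    have h2 : ∑ ℓ ∈ Finset.Icc (-K) (K+1), t ℓ
        = t (-K) + ∑ ℓ ∈ Finset.Icc (-K+1) (K+1), t ℓ :=
      sum_Icc_bot' t (-K+1) (by omega) (by ring)
    linarith
  -- per-atom bounds
  have hstep : ∀ ℓ ∈ Finset.Icc (-K) K,
      AF / 2 * ((v ℓ)^2 + (v (ℓ+1))^2) + (t (ℓ+1) - t ℓ)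
      ≤ qaP pF p2F rF r2F rrF rr2F g1 g2 (v (ℓ-1)) (v ℓ) (v (ℓ+1)) (v (ℓ+2)) := by
    intro ℓ _
    have h := key_atom pF p2F rF r2F rrF rr2F g1 g2 hH1c hH1d hH1g hH2
      (v (ℓ-1)) (v ℓ) (v (ℓ+1)) (v (ℓ+2))
    have e1 : t (ℓ+1) = Tqnl p2F rF r2F rr2F g1 g2 (v ℓ) (v (ℓ+1)) (v (ℓ+2)) := by
      simp only [htdef]
      rw [show (ℓ+1-1 : ℤ) = ℓ by ring, show (ℓ+1+1 : ℤ) = ℓ+2 by ring]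
    have e2 : t ℓ = Tqnl p2F rF r2F rr2F g1 g2 (v (ℓ-1)) (v ℓ) (v (ℓ+1)) := by
      simp only [htdef]
    rw [e1, e2]
    exact h
  have hA : ∑ ℓ ∈ Finset.Icc (-K) K,
        (AF / 2 * ((v ℓ)^2 + (v (ℓ+1))^2) + (t (ℓ+1) - t ℓ))
      ≤ ∑ ℓ ∈ Finset.Icc (-K) K,
        qaP pF p2F rF r2F rrF rr2F g1 g2 (v (ℓ-1)) (v ℓ) (v (ℓ+1)) (v (ℓ+2)) :=
    Finset.sum_le_sum hstep
  have hAexp : ∑ ℓ ∈ Finset.Icc (-K) K,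
        (AF / 2 * ((v ℓ)^2 + (v (ℓ+1))^2) + (t (ℓ+1) - t ℓ))
      = AF * (∑ ℓ ∈ Finset.Icc (-K) K, (v ℓ)^2)
        + AF/2 * (v (K+1))^2 - AF/2 * (v (-K))^2 + (t (K+1) - t (-K)) := by
    rw [Finset.sum_add_distrib, Finset.sum_sub_distrib, ← Finset.mul_sum,
      Finset.sum_add_distrib, hshiftF, hshiftT]
    ring
  -- interface bounds
  have hIR := key_intf pF p2F rF r2F rrF rr2F g1 g2 hH1c hH1d hH1g hH2
    (v K) (v (K+1)) (v (K+2)) (v (K+3))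
  have etR : Tqnl p2F rF r2F rr2F g1 g2 (v K) (v (K+1)) (v (K+2)) = t (K+1) := by
    simp only [htdef]
    rw [show (K+1-1 : ℤ) = K by ring, show (K+1+1 : ℤ) = K+2 by ring]
  rw [etR] at hIR
  have hIL := key_intf pF p2F rF r2F rrF rr2F g1 g2 hH1c hH1d hH1g hH2
    (v (-K+1)) (v (-K)) (v (-K-1)) (v (-K-2))
  have etL : Tqnl p2F rF r2F rr2F g1 g2 (v (-K+1)) (v (-K)) (v (-K-1)) = -t (-K) := by
    simp only [htdef]
    rw [Tqnl_antisym]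
  rw [etL] at hIL
  -- final combination
  have hsplitF := hsplit (fun ℓ => (v ℓ)^2)
  rw [hAexp] at hA
  have hPm : AF * (∑ ℓ ∈ Finset.Icc (-N+1) N, (v ℓ)^2)
      = AF * (∑ ℓ ∈ C, (v ℓ)^2) + AF * (v (-K-2))^2 + AF * (v (-K-1))^2
        + AF * (∑ ℓ ∈ Finset.Icc (-K) K, (v ℓ)^2) + AF * (v (K+1))^2 + AF * (v (K+2))^2 := by
    rw [hsplitF, hMdec]; ring
  linarith [hA, hIR, hIL, hqc, hPm]

/-- lower bound for `Q^qnl`. -/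
theorem qnl_stability_lower_bound (N K : ℤ) (hK0 : 0 ≤ K) (hKN : K + 3 ≤ N)
    (pF p2F rF r2F rrF rr2F g1 g2 : ℝ)
    (hH1a : 0 < pF) (hH1b : p2F < 0) (hH1c : rF ≤ 0) (hH1d : r2F ≤ 0)
    (hH1e : 0 ≤ rrF) (hH1f : 0 ≤ rr2F) (hH1g : 0 ≤ g2)
    (hH2 : 0 ≤ BFc p2F rF r2F rr2F g1 g2) :
    ∀ u : ℤ → ℝ, InU N u →
      AFc pF p2F rF r2F rrF rr2F g1 g2 * nrm2 N (Dd N u)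
        ≤ Qqnl N K pF p2F rF r2F rrF rr2F g1 g2 u := by
  intro u hu
  have hper := hu.1
  have hNpos : (0:ℤ) < N := by omega
  have hε : 0 < eps N := by
    have h : (0:ℝ) < (N:ℝ) := by exact_mod_cast hNpos
    unfold eps; positivity
  have hvper : ∀ ℓ, Dd N u (ℓ + 2*N) = Dd N u ℓ := by
    intro ℓ
    unfold Dd
    rw [show ℓ + 2*N - 1 = (ℓ - 1) + 2*N by ring, hper, hper]
  have hmain := main_est N K hK0 hKN pF p2F rF r2F rrF rr2F g1 g2 hH1c hH1d hH1g hH2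
    (Dd N u) hvper
  unfold Qqnl nrm2
  have e1 : ∑ ℓ ∈ Finset.Icc (-K) K, qaAtom N pF p2F rF r2F rrF rr2F g1 g2 u ℓ
      = ∑ ℓ ∈ Finset.Icc (-K) K, qaP pF p2F rF r2F rrF rr2F g1 g2
          (Dd N u (ℓ-1)) (Dd N u ℓ) (Dd N u (ℓ+1)) (Dd N u (ℓ+2)) :=
    Finset.sum_congr rfl (fun ℓ _ => rfl)
  have e2 : ∑ ℓ ∈ (Finset.Icc (-N+1) (-K-3) ∪ Finset.Icc (K+3) N),
        qcAtom N pF p2F rF r2F rrF rr2F g1 g2 u ℓ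
      = ∑ ℓ ∈ (Finset.Icc (-N+1) (-K-3) ∪ Finset.Icc (K+3) N),
        AFc pF p2F rF r2F rrF rr2F g1 g2 / 2 * ((Dd N u ℓ)^2 + (Dd N u (ℓ+1))^2) :=
    Finset.sum_congr rfl (fun ℓ _ => rfl)
  have e3 : qiAtom N pF p2F rF r2F rrF rr2F g1 g2 u K (K+1) (K+2)
      = qiP pF p2F rF r2F rrF rr2F g1 g2 (Dd N u K) (Dd N u (K+1)) (Dd N u (K+2)) := rfl
  have e4 : qiAtom N pF p2F rF r2F rrF rr2F g1 g2 u (K+1) (K+2) (K+3)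
      = qiP pF p2F rF r2F rrF rr2F g1 g2 (Dd N u (K+1)) (Dd N u (K+2)) (Dd N u (K+3)) := rfl
  have e5 : qiAtom N pF p2F rF r2F rrF rr2F g1 g2 u (-K+1) (-K) (-K-1)
      = qiP pF p2F rF r2F rrF rr2F g1 g2 (Dd N u (-K+1)) (Dd N u (-K)) (Dd N u (-K-1)) := rfl
  have e6 : qiAtom N pF p2F rF r2F rrF rr2F g1 g2 u (-K) (-K-1) (-K-2)
      = qiP pF p2F rF r2F rrF rr2F g1 g2 (Dd N u (-K)) (Dd N u (-K-1)) (Dd N u (-K-2)) := rfl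
  rw [e1, e2, e3, e4, e5, e6]
  calc AFc pF p2F rF r2F rrF rr2F g1 g2
        * (eps N * ∑ ℓ ∈ Finset.Icc (-N+1) N, (Dd N u ℓ)^2)
      = eps N * (AFc pF p2F rF r2F rrF rr2F g1 g2
        * ∑ ℓ ∈ Finset.Icc (-N+1) N, (Dd N u ℓ)^2) := by ring
    _ ≤ _ := by
        apply mul_le_mul_of_nonneg_left hmain (le_of_lt hε)
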